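/- Characterization of generalized quasi-stationary states by long-run entropy: under the assumptions that the core matrix M̃ has N−1 distinct positive eigenvalues and φ is strictly convex, twice continuously differentiable near 1, with φ(0) = φ(1) = 0, let p ∈ Δ^N with ⟨u^{(1)},p⟩ > 0. Then p ∉ span{e_0, v^{(1)}, e_N} if and only if there exist n_0 ∈ ℕ and p̄ ∈ Δ^N such that E(M^n p̄) < E(M^n p) for all n > n_0. -/

import Mathlib

open Finset Matrix Filter

noncomputable def moranM (N : ℕ) (s : ℕ → ℝ) : Matrix (Fin (N + 1)) (Fin (N + 1)) ℝ :=
  fun i j =>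
    if (i : ℕ) + 1 = (j : ℕ) then ((j : ℕ) : ℝ) / N * (1 - s (j : ℕ))
    else if (i : ℕ) = (j : ℕ) + 1 then ((N : ℝ) - ((j : ℕ) : ℝ)) / N * s (j : ℕ)
    else if (i : ℕ) = (j : ℕ) then
      1 - ((j : ℕ) : ℝ) / N * (1 - s (j : ℕ)) - ((N : ℝ) - ((j : ℕ) : ℝ)) / N * s (j : ℕ)
    else 0

def IsTypeSelection (N : ℕ) (s : ℕ → ℝ) : Prop :=
  s 0 = 0 ∧ s N = 1 ∧ ∀ i : ℕ, 0 < i → i < N → 0 < s i ∧ s i < 1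

noncomputable def moranCore (N : ℕ) (s : ℕ → ℝ) : Matrix (Fin (N - 1)) (Fin (N - 1)) ℝ :=
  fun i j =>
    moranM N s ⟨(i : ℕ) + 1, by have := i.isLt; omega⟩ ⟨(j : ℕ) + 1, by have := j.isLt; omega⟩

def embIn (N : ℕ) (i : Fin (N - 1)) : Fin (N + 1) :=
  ⟨(i : ℕ) + 1, by have := i.isLt; omega⟩

section Aux
set_option linter.unreachableTactic false
set_option linter.unusedTactic false
set_option linter.unnecessarySeqFocus false

lemma embIn_inj (N : ℕ) : Function.Injective (embIn N) := by
  intro a b h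
  simpa [embIn, Fin.ext_iff] using h

lemma sum_split (N : ℕ) (hN : 2 ≤ N) (f : Fin (N + 1) → ℝ) :
    ∑ j, f j = f ⟨0, by omega⟩ + f (Fin.last N) + ∑ i : Fin (N - 1), f (embIn N i) := by
  have huniv : (Finset.univ : Finset (Fin (N + 1))) =
      insert ⟨0, by omega⟩ (insert (Fin.last N)
        ((Finset.univ : Finset (Fin (N - 1))).image (embIn N))) := by
    ext j
    simp only [Finset.mem_univ, Finset.mem_insert, Finset.mem_image, true_iff, embIn,
      Fin.ext_iff, Fin.val_last]
    rcases Nat.lt_or_ge (j : ℕ) 1 with h | h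
    · left; omega
    · rcases Nat.lt_or_ge (j : ℕ) N with h2 | h2
      · right; right
        exact ⟨⟨(j : ℕ) - 1, by omega⟩, by simp; omega⟩
      · right; left; have := j.isLt; omega
  rw [huniv, Finset.sum_insert, Finset.sum_insert, Finset.sum_image]
  · ring_nf
  · intro a _ b _ h; exact embIn_inj N h
  · simp only [Finset.mem_image, not_exists]
    intro a
    simp [embIn, Fin.ext_iff, Fin.val_last]
    have := a.isLt; omega
  · simp only [Finset.mem_insert, Finset.mem_image, not_or, not_exists]
    constructor
    · simp [Fin.ext_iff, Fin.val_last]; omega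
    · intro a; simp [embIn, Fin.ext_iff]

lemma moranM_left_zero (N : ℕ) (hN : 2 ≤ N) (s : ℕ → ℝ) (hs0 : s 0 = 0)
    (i : Fin (N - 1)) : moranM N s (embIn N i) ⟨0, by omega⟩ = 0 := by
  have hi := i.isLt
  simp only [moranM, embIn]
  split_ifs with h1 h2 h3 <;> simp_all <;> omega

lemma moranM_right_zero (N : ℕ) (hN : 2 ≤ N) (s : ℕ → ℝ) (hsN : s N = 1)
    (i : Fin (N - 1)) : moranM N s (embIn N i) (Fin.last N) = 0 := by
  have hi := i.isLt
  simp only [moranM, embIn, Fin.val_last]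
  split_ifs with h1 h2 h3 <;> simp_all <;> omega

lemma moranM_nonneg (N : ℕ) (hN : 2 ≤ N) (s : ℕ → ℝ) (hs : IsTypeSelection N s)
    (i j : Fin (N + 1)) : 0 ≤ moranM N s i j := by
  obtain ⟨h0, h1, hi⟩ := hs
  have hNpos : (0:ℝ) < N := by exact_mod_cast Nat.lt_of_lt_of_le (by norm_num) hN
  have hj := j.isLt
  have hsj : 0 ≤ s (j:ℕ) ∧ s (j:ℕ) ≤ 1 := by
    rcases Nat.eq_zero_or_pos (j:ℕ) with h | h
    · rw [h, h0]; norm_num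
    · rcases Nat.lt_or_ge (j:ℕ) N with h2 | h2
      · have := hi _ h h2; constructor <;> linarith [this.1, this.2]
      · have : (j:ℕ) = N := by omega
        rw [this, h1]; norm_num
  have hjN : ((j:ℕ):ℝ) ≤ N := by
    have : (j:ℕ) ≤ N := by omega
    exact_mod_cast this
  have hj0 : (0:ℝ) ≤ ((j:ℕ):ℝ) := by positivity
  simp only [moranM]
  split_ifs with hc1 hc2 hc3
  · have : (0:ℝ) ≤ ((j:ℕ):ℝ)/N := by positivity
    nlinarith [hsj.1, hsj.2]
  · have : (0:ℝ) ≤ ((N:ℝ) - (j:ℕ))/N := by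
      apply div_nonneg _ (le_of_lt hNpos); linarith
    nlinarith [hsj.1, hsj.2]
  · have ha : (0:ℝ) ≤ ((j:ℕ):ℝ)/N := by positivity
    have ha1 : ((j:ℕ):ℝ)/N ≤ 1 := by rw [div_le_one hNpos]; exact hjN
    have hb : (0:ℝ) ≤ ((N:ℝ) - (j:ℕ))/N := by
      apply div_nonneg _ (le_of_lt hNpos); linarith
    have hab : ((j:ℕ):ℝ)/N + ((N:ℝ) - (j:ℕ))/N = 1 := by field_simp; ring
    nlinarith [hsj.1, hsj.2]
  · exact le_refl 0

lemma moran_core_step (N : ℕ) (hN : 2 ≤ N) (s : ℕ → ℝ) (hs0 : s 0 = 0) (hsN : s N = 1)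
    (q : Fin (N + 1) → ℝ) (i : Fin (N - 1)) :
    (moranM N s).mulVec q (embIn N i) = (moranCore N s).mulVec (fun k => q (embIn N k)) i := by
  unfold Matrix.mulVec dotProduct
  rw [sum_split N hN (fun j => moranM N s (embIn N i) j * q j)]
  rw [moranM_left_zero N hN s hs0 i, moranM_right_zero N hN s hsN i]
  simp only [zero_mul, zero_add, add_zero]
  apply Finset.sum_congr rfl
  intro k _
  rfl

lemma moran_core_pow (N : ℕ) (hN : 2 ≤ N) (s : ℕ → ℝ) (hs0 : s 0 = 0) (hsN : s N = 1)
    (q : Fin (N + 1) → ℝ) (n : ℕ) (i : Fin (N - 1)) :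
    (moranM N s ^ n).mulVec q (embIn N i) =
      (moranCore N s ^ n).mulVec (fun k => q (embIn N k)) i := by
  induction n generalizing i with
  | zero => simp [Matrix.one_mulVec]
  | succ m ih =>
    rw [pow_succ', pow_succ', ← Matrix.mulVec_mulVec, ← Matrix.mulVec_mulVec]
    rw [moran_core_step N hN s hs0 hsN _ i]
    congr 1
    funext k
    exact ih k

lemma moran_pow_nonneg (N : ℕ) (hN : 2 ≤ N) (s : ℕ → ℝ) (hs : IsTypeSelection N s)
    (p : Fin (N + 1) → ℝ) (hp : ∀ i, 0 ≤ p i) (n : ℕ) (i : Fin (N + 1)) :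
    0 ≤ (moranM N s ^ n).mulVec p i := by
  induction n generalizing i with
  | zero => simpa [Matrix.one_mulVec] using hp i
  | succ m ih =>
    rw [pow_succ', ← Matrix.mulVec_mulVec]
    unfold Matrix.mulVec dotProduct
    apply Finset.sum_nonneg
    intro j _
    exact mul_nonneg (moranM_nonneg N hN s hs i j) (ih j)

end Aux

section MoranAux2
set_option linter.unusedSectionVars false
variable {ι : Type*} [Fintype ι] [DecidableEq ι]

lemma moranAux_eig_pow (M : Matrix ι ι ℝ) (v : ι → ℝ) (μ : ℝ)
    (h : M.mulVec v = μ • v) (n : ℕ) : (M ^ n).mulVec v = μ ^ n • v := by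
  induction n with
  | zero => simp [Matrix.one_mulVec]
  | succ m ih =>
    rw [pow_succ', ← Matrix.mulVec_mulVec, ih, Matrix.mulVec_smul, h, smul_smul, pow_succ', mul_comm]

lemma moranAux_eig_pow_vec (M : Matrix ι ι ℝ) (u : ι → ℝ) (μ : ℝ)
    (h : Matrix.vecMul u M = μ • u) (n : ℕ) : Matrix.vecMul u (M ^ n) = μ ^ n • u := by
  induction n with
  | zero => simp [Matrix.vecMul_one]
  | succ m ih =>
    rw [pow_succ, ← Matrix.vecMul_vecMul, ih, Matrix.smul_vecMul, h, smul_smul, pow_succ, mul_comm]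

lemma moranAux_biorth (M : Matrix ι ι ℝ) (u v : ι → ℝ) (a b : ℝ) (hab : a ≠ b)
    (hu : Matrix.vecMul u M = a • u) (hv : M.mulVec v = b • v) :
    ∑ i, u i * v i = 0 := by
  have h1 : u ⬝ᵥ M.mulVec v = Matrix.vecMul u M ⬝ᵥ v := Matrix.dotProduct_mulVec u M v
  rw [hu, hv, dotProduct_smul, smul_dotProduct] at h1
  have h2 : (b - a) * (u ⬝ᵥ v) = 0 := by
    simp only [smul_eq_mul] at h1; ring_nf; ring_nf at h1; linarith
  have := mul_eq_zero.mp h2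
  rcases this with h | h
  · exact absurd (by linarith : a = b) hab
  · simpa [dotProduct] using h

lemma moranAux_jensen_le (φ : ℝ → ℝ) (hφ : ConvexOn ℝ (Set.Ici 0) φ) (hφ1 : φ 1 = 0)
    (v u q : ι → ℝ) (hv : ∀ i, 0 < v i) (hu : ∀ i, 0 < u i) (hq : ∀ i, 0 ≤ q i)
    (huv : ∑ i, u i * v i = 1) (hS : 0 < ∑ i, u i * q i) :
    0 ≤ ∑ i, φ (q i / (v i * ∑ j, u j * q j)) * v i * u i := by
  set S := ∑ j, u j * q j with hSdef
  set w : ι → ℝ := fun i => v i * u i with hw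
  set x : ι → ℝ := fun i => q i / (v i * S) with hx
  have hws : ∑ i, w i = 1 := by
    rw [← huv]; exact Finset.sum_congr rfl fun i _ => mul_comm _ _
  have hterm : ∀ i, w i • x i = u i * q i / S := by
    intro i
    have hvi := (hv i).ne'
    simp only [hw, hx, smul_eq_mul]
    field_simp
  have hwx : ∑ i, w i • x i = 1 := by
    simp_rw [hterm]
    rw [← Finset.sum_div, div_self hS.ne']
  have hle := hφ.map_sum_le (t := Finset.univ) (w := w) (p := x)
    (fun i _ => le_of_lt (mul_pos (hv i) (hu i))) hws
    (fun i _ => div_nonneg (hq i) (le_of_lt (mul_pos (hv i) hS)))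
  rw [hwx, hφ1] at hle
  calc (0:ℝ) ≤ ∑ i, w i • φ (x i) := hle
    _ = ∑ i, φ (q i / (v i * S)) * v i * u i := by
        exact Finset.sum_congr rfl fun i _ => by simp only [hw, hx, smul_eq_mul]; ring

lemma moranAux_jensen_lt (φ : ℝ → ℝ) (hφ : StrictConvexOn ℝ (Set.Ici 0) φ) (hφ1 : φ 1 = 0)
    (v u q : ι → ℝ) (hv : ∀ i, 0 < v i) (hu : ∀ i, 0 < u i) (hq : ∀ i, 0 ≤ q i)
    (huv : ∑ i, u i * v i = 1) (hS : 0 < ∑ i, u i * q i)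
    (hne : ∃ i, q i ≠ (∑ j, u j * q j) * v i) :
    0 < ∑ i, φ (q i / (v i * ∑ j, u j * q j)) * v i * u i := by
  set S := ∑ j, u j * q j with hSdef
  set w : ι → ℝ := fun i => v i * u i with hw
  set x : ι → ℝ := fun i => q i / (v i * S) with hx
  have hws : ∑ i, w i = 1 := by
    rw [← huv]; exact Finset.sum_congr rfl fun i _ => mul_comm _ _
  have hterm : ∀ i, w i • x i = u i * q i / S := by
    intro i
    have hvi := (hv i).ne'
    simp only [hw, hx, smul_eq_mul]
    field_simp
  have hwx : ∑ i, w i • x i = 1 := by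
    simp_rw [hterm]
    rw [← Finset.sum_div, div_self hS.ne']
  have hne' : ∃ j ∈ Finset.univ, ∃ k ∈ Finset.univ, x j ≠ x k := by
    by_contra hcon
    push_neg at hcon
    obtain ⟨i, hi⟩ := hne
    have hall : ∀ k, x k = x i := fun k => hcon k (Finset.mem_univ k) i (Finset.mem_univ i)
    have : ∑ k, w k • x k = x i := by
      calc ∑ k, w k • x k = ∑ k, w k * x i := by
            exact Finset.sum_congr rfl fun k _ => by rw [smul_eq_mul, hall k]
        _ = (∑ k, w k) * x i := by rw [Finset.sum_mul]
        _ = x i := by rw [hws, one_mul]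
    have hxi1 : x i = 1 := by rw [← this, hwx]
    have hpos : v i * S ≠ 0 := (mul_pos (hv i) hS).ne'
    have : q i = v i * S := by
      have := (div_eq_one_iff_eq hpos).mp hxi1
      exact this
    exact hi (by rw [this]; ring)
  have hlt := hφ.map_sum_lt (t := Finset.univ) (w := w) (p := x)
    (fun i _ => mul_pos (hv i) (hu i)) hws
    (fun i _ => div_nonneg (hq i) (le_of_lt (mul_pos (hv i) hS))) hne'
  rw [hwx, hφ1] at hlt
  calc (0:ℝ) < ∑ i, w i • φ (x i) := hlt
    _ = ∑ i, φ (q i / (v i * S)) * v i * u i := by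
        exact Finset.sum_congr rfl fun i _ => by simp only [hw, hx, smul_eq_mul]; ring

lemma moranAux_ratio_one (v u : ι → ℝ) (hv : ∀ i, 0 < v i)
    (huv : ∑ i, u i * v i = 1) (c : ℝ) (hc : c ≠ 0) (i : ι) :
    (c * v i) / (v i * ∑ j, u j * (c * v j)) = 1 := by
  have hsum : ∑ j, u j * (c * v j) = c := by
    calc ∑ j, u j * (c * v j) = ∑ j, c * (u j * v j) := by
          exact Finset.sum_congr rfl fun j _ => by ring
      _ = c * ∑ j, u j * v j := by rw [← Finset.mul_sum]
      _ = c := by rw [huv, mul_one]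
  rw [hsum, div_eq_one_iff_eq (mul_ne_zero (hv i).ne' hc)]
  ring
end MoranAux2

lemma fin_cases3 (N : ℕ) (hN : 2 ≤ N) (j : Fin (N + 1)) :
    j = ⟨0, by omega⟩ ∨ j = Fin.last N ∨ ∃ i : Fin (N - 1), j = embIn N i := by
  rcases Nat.lt_or_ge (j : ℕ) 1 with h | h
  · left; exact Fin.ext (by show (j:ℕ) = 0; omega)
  rcases Nat.lt_or_ge (j : ℕ) N with h2 | h2
  · right; right
    exact ⟨⟨(j : ℕ) - 1, by omega⟩, Fin.ext (by simp [embIn]; omega)⟩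
  · right; left; exact Fin.ext (by simp [Fin.val_last]; have := j.isLt; omega)

/-- characterization of generalized quasi-stationary states by
long-run entropy: p ∉ span{e₀, v^{(1)}, e_N} iff some other initial condition
eventually has strictly smaller entropy along the evolution. -/
theorem moran_quasi_stationary_characterization
    (N : ℕ) (hN : 2 ≤ N) (s : ℕ → ℝ) (hs : IsTypeSelection N s)
    (μ : Fin (N - 1) → ℝ) (hμdist : Function.Injective μ) (hμpos : ∀ i, 0 < μ i)
    (V U : Fin (N - 1) → (Fin (N - 1) → ℝ))
    (hVli : LinearIndependent ℝ V) (hUli : LinearIndependent ℝ U)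
    (hMV : ∀ i, (moranCore N s).mulVec (V i) = μ i • V i)
    (hUM : ∀ i, (moranCore N s).vecMul (U i) = μ i • U i)
    (i0 : Fin (N - 1)) (hi0 : (i0 : ℕ) = 0) (hi0max : ∀ i, i ≠ i0 → μ i < μ i0)
    (hV1sum : ∑ j, V i0 j = 1) (hUV : ∀ i, ∑ j, U i j * V i j = 1)
    (hVpos : ∀ j, 0 < V i0 j) (hUpos : ∀ j, 0 < U i0 j)
    (vext : Fin (N + 1) → ℝ)
    (hvx0 : vext ⟨0, by omega⟩ = 0) (hvxN : vext (Fin.last N) = 0)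
    (hvxi : ∀ i : Fin (N - 1), vext (embIn N i) = V i0 i)
    (φ : ℝ → ℝ) (hφ : StrictConvexOn ℝ (Set.Ici 0) φ)
    (hφC2 : ContDiffAt ℝ 2 φ 1) (hφ0 : φ 0 = 0) (hφ1 : φ 1 = 0)
    (p : Fin (N + 1) → ℝ) (hp : ∀ i, 0 ≤ p i) (hpsum : ∑ i, p i = 1)
    (hip : 0 < ∑ i : Fin (N - 1), U i0 i * p (embIn N i))
    (E : (Fin (N + 1) → ℝ) → ℝ)
    (hE : ∀ q : Fin (N + 1) → ℝ, E q = ∑ i : Fin (N - 1),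
      φ (q (embIn N i) / (V i0 i * ∑ j : Fin (N - 1), U i0 j * q (embIn N j)))
        * V i0 i * U i0 i) :
    p ∉ Submodule.span ℝ
        ({(Pi.single (⟨0, by omega⟩ : Fin (N + 1)) 1 : Fin (N + 1) → ℝ), vext,
          (Pi.single (Fin.last N) 1 : Fin (N + 1) → ℝ)} : Set (Fin (N + 1) → ℝ)) ↔
      ∃ (n0 : ℕ) (pb : Fin (N + 1) → ℝ), (∀ i, 0 ≤ pb i) ∧ (∑ i, pb i = 1) ∧
        ∀ n : ℕ, n0 < n →
          E ((moranM N s ^ n).mulVec pb) < E ((moranM N s ^ n).mulVec p) := by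
  classical
  obtain ⟨hs0, hsN, hsint⟩ := hs
  have hs' : IsTypeSelection N s := ⟨hs0, hsN, hsint⟩
  set M := moranM N s with hM
  set C := moranCore N s with hC
  have huv : ∑ i, U i0 i * V i0 i = 1 := hUV i0
  have hμ0pos : 0 < μ i0 := hμpos i0
  have hcore : ∀ (q : Fin (N + 1) → ℝ) (n : ℕ) (i : Fin (N - 1)),
      (M ^ n).mulVec q (embIn N i) = (C ^ n).mulVec (fun k => q (embIn N k)) i :=
    fun q n i => moran_core_pow N hN s hs0 hsN q n i
  -- evaluation of the boundary singles
  have he0emb : ∀ i : Fin (N - 1),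
      (Pi.single (⟨0, by omega⟩ : Fin (N + 1)) 1 : Fin (N + 1) → ℝ) (embIn N i) = 0 := by
    intro i
    simp [Pi.single_apply, embIn, Fin.ext_iff]
  have heNemb : ∀ i : Fin (N - 1),
      (Pi.single (Fin.last N) 1 : Fin (N + 1) → ℝ) (embIn N i) = 0 := by
    intro i
    have hi := i.isLt
    simp only [Pi.single_apply, embIn, Fin.ext_iff, Fin.val_last]
    rw [if_neg (by omega)]
  -- span characterization
  have hspan_iff : ∀ g : Fin (N + 1) → ℝ,
      g ∈ Submodule.span ℝ
        ({(Pi.single (⟨0, by omega⟩ : Fin (N + 1)) 1 : Fin (N + 1) → ℝ), vext,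
          (Pi.single (Fin.last N) 1 : Fin (N + 1) → ℝ)} : Set (Fin (N + 1) → ℝ)) ↔
        ∃ b : ℝ, ∀ i : Fin (N - 1), g (embIn N i) = b * V i0 i := by
    intro g
    constructor
    · intro hg
      rw [Submodule.mem_span_insert] at hg
      obtain ⟨a, z, hz, hgz⟩ := hg
      rw [Submodule.mem_span_insert] at hz
      obtain ⟨b, w, hw, hzw⟩ := hz
      rw [Submodule.mem_span_singleton] at hw
      obtain ⟨c, hc⟩ := hw
      refine ⟨b, fun i => ?_⟩
      have hgi : g (embIn N i) =
          a * (Pi.single (⟨0, by omega⟩ : Fin (N + 1)) 1 : Fin (N + 1) → ℝ) (embIn N i) +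
          (b * vext (embIn N i) +
            c * (Pi.single (Fin.last N) 1 : Fin (N + 1) → ℝ) (embIn N i)) := by
        rw [hgz, hzw, ← hc]
        simp [smul_eq_mul]
      rw [hgi, he0emb i, heNemb i, hvxi i]
      ring
    · rintro ⟨b, hb⟩
      have hrep : g = g ⟨0, by omega⟩ •
            (Pi.single (⟨0, by omega⟩ : Fin (N + 1)) 1 : Fin (N + 1) → ℝ) +
          b • vext + g (Fin.last N) • (Pi.single (Fin.last N) 1 : Fin (N + 1) → ℝ) := by
        funext j
        rcases fin_cases3 N hN j with h | h | ⟨i, h⟩ <;> subst h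
        · have h1 : (Pi.single (⟨0, by omega⟩ : Fin (N + 1)) 1 : Fin (N + 1) → ℝ)
              (⟨0, by omega⟩ : Fin (N + 1)) = 1 := Pi.single_eq_same _ _
          have h2 : (Pi.single (Fin.last N) 1 : Fin (N + 1) → ℝ) (⟨0, by omega⟩ : Fin (N + 1)) = 0 := by
            simp only [Pi.single_apply, Fin.ext_iff, Fin.val_last]
            rw [if_neg (by omega)]
          have h3 : vext (⟨0, by omega⟩ : Fin (N + 1)) = 0 := hvx0
          simp only [Pi.add_apply, Pi.smul_apply, smul_eq_mul, h1, h2, h3]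
          ring
        · have h1 : (Pi.single (⟨0, by omega⟩ : Fin (N + 1)) 1 : Fin (N + 1) → ℝ) (Fin.last N) = 0 := by
            rw [Pi.single_apply, if_neg]
            simp [Fin.ext_iff, Fin.val_last]
            omega
          have h2 : (Pi.single (Fin.last N) 1 : Fin (N + 1) → ℝ) (Fin.last N) = 1 := Pi.single_eq_same _ _
          simp only [Pi.add_apply, Pi.smul_apply, smul_eq_mul, h1, h2, hvxN]
          ring
        · simp only [Pi.add_apply, Pi.smul_apply, smul_eq_mul, he0emb i, heNemb i, hvxi i,
            hb i]
          ring
      rw [hrep]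
      refine Submodule.add_mem _ (Submodule.add_mem _ ?_ ?_) ?_
      · exact Submodule.smul_mem _ _ (Submodule.subset_span (by simp))
      · exact Submodule.smul_mem _ _ (Submodule.subset_span (by simp))
      · exact Submodule.smul_mem _ _ (Submodule.subset_span (by simp))
  -- representation of the core part of p
  obtain ⟨r, hr⟩ : ∃ r : Fin (N - 1) → ℝ,
      (fun i => p (embIn N i)) = ∑ i, r i • V i := by
    have hfinrank : Fintype.card (Fin (N - 1)) =
        Module.finrank ℝ (Fin (N - 1) → ℝ) := by simp
    haveI : Nonempty (Fin (N - 1)) := ⟨i0⟩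
    let B := basisOfLinearIndependentOfCardEqFinrank hVli hfinrank
    refine ⟨B.repr (fun i => p (embIn N i)), ?_⟩
    have h1 := B.sum_repr (fun i => p (embIn N i))
    have h2 : ∀ i, B i = V i := fun i => by
      simp [B, coe_basisOfLinearIndependentOfCardEqFinrank]
    conv_lhs => rw [← h1]
    exact Finset.sum_congr rfl fun i _ => by rw [h2 i]
  have hMnx : ∀ n : ℕ, (C ^ n).mulVec (fun i => p (embIn N i)) =
      ∑ i, (r i * μ i ^ n) • V i := by
    intro n
    rw [hr, ← Matrix.mulVecLin_apply, map_sum]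
    refine Finset.sum_congr rfl fun i _ => ?_
    rw [_root_.map_smul, Matrix.mulVecLin_apply, moranAux_eig_pow C (V i) (μ i) (hMV i) n,
      smul_smul]
  -- not proportional
  have hnoprop : p ∉ Submodule.span ℝ
        ({(Pi.single (⟨0, by omega⟩ : Fin (N + 1)) 1 : Fin (N + 1) → ℝ), vext,
          (Pi.single (Fin.last N) 1 : Fin (N + 1) → ℝ)} : Set (Fin (N + 1) → ℝ)) →
      ∀ (n : ℕ) (b : ℝ), (C ^ n).mulVec (fun i => p (embIn N i)) ≠ b • V i0 := by
    intro hp' n b heq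
    apply hp'
    rw [hspan_iff p]
    have hg : ∑ i, ((r i * μ i ^ n) - (if i = i0 then b else 0)) • V i = 0 := by
      have hsplit : ∀ i : Fin (N - 1),
          ((r i * μ i ^ n) - (if i = i0 then b else 0)) • V i =
          (r i * μ i ^ n) • V i - (if i = i0 then b • V i0 else 0) := by
        intro i
        split_ifs with h
        · subst h; rw [sub_smul]
        · rw [sub_smul]; simp
      rw [Finset.sum_congr rfl fun i _ => hsplit i, Finset.sum_sub_distrib,
        Finset.sum_ite_eq' Finset.univ i0 (fun _ => b • V i0), if_pos (Finset.mem_univ i0),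
        ← hMnx n, heq, sub_self]
    have hcoef := Fintype.linearIndependent_iff.mp hVli _ hg
    refine ⟨r i0, fun i => ?_⟩
    have hx : p (embIn N i) = (∑ j, r j • V j) i := by rw [← hr]
    rw [hx, Finset.sum_apply, Finset.sum_eq_single i0]
    · simp [smul_eq_mul]
    · intro j _ hj
      have hcj := hcoef j
      rw [if_neg hj, sub_zero] at hcj
      have hrj : r j = 0 := by
        have := pow_pos (hμpos j) n
        rcases mul_eq_zero.mp hcj with h | h
        · exact h
        · exact absurd h this.ne'
      simp [hrj]
    · intro h; exact absurd (Finset.mem_univ i0) h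
  constructor
  · -- forward
    intro hp'
    refine ⟨0, vext, ?_, ?_, ?_⟩
    · intro j
      rcases fin_cases3 N hN j with h | h | ⟨i, h⟩ <;> subst h
      · exact le_of_eq hvx0.symm
      · exact le_of_eq hvxN.symm
      · rw [hvxi i]; exact (hVpos i).le
    · have h1 : ∑ i : Fin (N - 1), vext (embIn N i) = 1 := by
        rw [← hV1sum]; exact Finset.sum_congr rfl fun i _ => hvxi i
      rw [sum_split N hN vext, hvx0, hvxN, h1]
      ring
    · intro n _
      -- entropy of evolved vext is 0
      have h1 : ∀ k : Fin (N - 1),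
          (M ^ n).mulVec vext (embIn N k) = μ i0 ^ n * V i0 k := by
        intro k
        rw [hcore vext n k]
        have h2 : (fun k => vext (embIn N k)) = V i0 := funext hvxi
        rw [h2, moranAux_eig_pow C (V i0) (μ i0) (hMV i0) n]
        simp
      have hEv : E ((M ^ n).mulVec vext) = 0 := by
        rw [hE]
        apply Finset.sum_eq_zero
        intro i _
        simp only [h1]
        rw [moranAux_ratio_one (V i0) (U i0) hVpos huv (μ i0 ^ n)
          (pow_pos hμ0pos n).ne', hφ1]
        ring
      -- entropy of evolved p is positive
      have hS : ∑ j, U i0 j * (C ^ n).mulVec (fun k => p (embIn N k)) j =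
          μ i0 ^ n * ∑ j, U i0 j * p (embIn N j) := by
        have h2 : Matrix.vecMul (U i0) (C ^ n) = μ i0 ^ n • U i0 :=
          moranAux_eig_pow_vec C (U i0) (μ i0) (hUM i0) n
        calc ∑ j, U i0 j * (C ^ n).mulVec (fun k => p (embIn N k)) j
            = U i0 ⬝ᵥ (C ^ n).mulVec (fun k => p (embIn N k)) := rfl
          _ = Matrix.vecMul (U i0) (C ^ n) ⬝ᵥ (fun k => p (embIn N k)) :=
              Matrix.dotProduct_mulVec _ _ _
          _ = (μ i0 ^ n • U i0) ⬝ᵥ (fun k => p (embIn N k)) := by rw [h2]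
          _ = μ i0 ^ n * ∑ j, U i0 j * p (embIn N j) := by
              rw [smul_dotProduct]; rfl
      have hSpos : 0 < ∑ j, U i0 j * (C ^ n).mulVec (fun k => p (embIn N k)) j := by
        rw [hS]; exact mul_pos (pow_pos hμ0pos n) hip
      have hqc : ∀ k, 0 ≤ (C ^ n).mulVec (fun k => p (embIn N k)) k := by
        intro k
        rw [← hcore p n k]
        exact moran_pow_nonneg N hN s hs' p hp n (embIn N k)
      have hne : ∃ i, (C ^ n).mulVec (fun k => p (embIn N k)) i ≠
          (∑ j, U i0 j * (C ^ n).mulVec (fun k => p (embIn N k)) j) * V i0 i := by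
        by_contra hcon
        push_neg at hcon
        exact hnoprop hp' n
          (∑ j, U i0 j * (C ^ n).mulVec (fun k => p (embIn N k)) j)
          (funext fun i => by rw [hcon i, Pi.smul_apply, smul_eq_mul])
      have hEp := moranAux_jensen_lt φ hφ hφ1 (V i0) (U i0)
        ((C ^ n).mulVec (fun k => p (embIn N k))) hVpos hUpos hqc huv hSpos hne
      have hEq : E ((M ^ n).mulVec p) =
          ∑ i, φ ((C ^ n).mulVec (fun k => p (embIn N k)) i /
            (V i0 i * ∑ j, U i0 j * (C ^ n).mulVec (fun k => p (embIn N k)) j))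
            * V i0 i * U i0 i := by
        rw [hE]
        exact Finset.sum_congr rfl fun i _ => by simp only [hcore p n]
      rw [hEv, hEq]
      exact hEp
  · -- reverse
    rintro ⟨n0, pb, hpb0, hpbsum, hlt⟩ hmem
    obtain ⟨b, hb⟩ := (hspan_iff p).mp hmem
    have hbval : ∑ i, U i0 i * p (embIn N i) = b := by
      calc ∑ i, U i0 i * p (embIn N i) = ∑ i, b * (U i0 i * V i0 i) := by
            exact Finset.sum_congr rfl fun i _ => by rw [hb i]; ring
        _ = b * ∑ i, U i0 i * V i0 i := by rw [← Finset.mul_sum]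
        _ = b := by rw [huv, mul_one]
    have hbpos : 0 < b := hbval ▸ hip
    have hlt' := hlt (n0 + 1) (by omega)
    -- E of evolved p is 0
    have hpcore : ∀ k : Fin (N - 1),
        (M ^ (n0 + 1)).mulVec p (embIn N k) = (b * μ i0 ^ (n0 + 1)) * V i0 k := by
      intro k
      rw [hcore p _ k]
      have hxb : (fun i => p (embIn N i)) = b • V i0 := funext fun i => by
        simp [hb i]
      rw [hxb, Matrix.mulVec_smul, moranAux_eig_pow C (V i0) (μ i0) (hMV i0)]
      simp [smul_smul]
      ring
    have hEp0 : E ((M ^ (n0 + 1)).mulVec p) = 0 := by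
      rw [hE]
      apply Finset.sum_eq_zero
      intro i _
      simp only [hpcore]
      rw [moranAux_ratio_one (V i0) (U i0) hVpos huv (b * μ i0 ^ (n0 + 1))
        (mul_pos hbpos (pow_pos hμ0pos (n0 + 1))).ne', hφ1]
      ring
    -- E of evolved pb is nonnegative
    have hqc : ∀ k, 0 ≤ (C ^ (n0 + 1)).mulVec (fun k => pb (embIn N k)) k := by
      intro k
      rw [← hcore pb _ k]
      exact moran_pow_nonneg N hN s hs' pb hpb0 _ (embIn N k)
    have hSb : 0 ≤ ∑ j, U i0 j * (C ^ (n0 + 1)).mulVec (fun k => pb (embIn N k)) j :=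
      Finset.sum_nonneg fun j _ => mul_nonneg (hUpos j).le (hqc j)
    have hEqb : E ((M ^ (n0 + 1)).mulVec pb) =
        ∑ i, φ ((C ^ (n0 + 1)).mulVec (fun k => pb (embIn N k)) i /
          (V i0 i * ∑ j, U i0 j * (C ^ (n0 + 1)).mulVec (fun k => pb (embIn N k)) j))
          * V i0 i * U i0 i := by
      rw [hE]
      exact Finset.sum_congr rfl fun i _ => by simp only [hcore pb (n0 + 1)]
    have hEpb : 0 ≤ E ((M ^ (n0 + 1)).mulVec pb) := by
      rw [hEqb]
      rcases eq_or_lt_of_le hSb with hS0 | hSpos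
      · apply le_of_eq
        symm
        apply Finset.sum_eq_zero
        intro i _
        rw [← hS0, mul_zero, div_zero, hφ0]
        ring
      · exact moranAux_jensen_le φ hφ.convexOn hφ1 (V i0) (U i0)
          ((C ^ (n0 + 1)).mulVec (fun k => pb (embIn N k))) hVpos hUpos hqc huv hSpos
    rw [hEp0] at hlt'
    linarith
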